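/- For every integer n ≥ 1, the recurrence coefficients and auxiliary quantities satisfy r_n(t) + Σ_{j=0}^{n−1} α_j(t) = 2β_n(t)·(α_n(t) + α_{n−1}(t)). -/

import Mathlib

open MeasureTheory Real Filter
open Topology

/-- The singularly perturbed Laguerre-type weight `w(x;t) = x^λ e^{-x² - t/x}` on `(0,∞)`. -/
noncomputable def weight (lam t x : ℝ) : ℝ := x ^ lam * Real.exp (-x ^ 2 - t / x)

/-- The system of monic orthogonal polynomials with respect to the weight
`w(x;t) = x^λ e^{-x² - t/x}` on `(0,∞)` (for every `t > 0`), together with the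
normalization constants `h n t` and the recurrence coefficients `α n t`, `β n t`
of the three-term recurrence `x Pₙ = Pₙ₊₁ + αₙ Pₙ + βₙ Pₙ₋₁`, `P₀ = 1`, `β₀ P₋₁ = 0`. -/
structure SingLaguerreOPS (lam : ℝ) : Type where
  P : ℕ → ℝ → Polynomial ℝ
  h : ℕ → ℝ → ℝ
  α : ℕ → ℝ → ℝ
  β : ℕ → ℝ → ℝ
  /-- all moments `∫₀^∞ x^k w(x;t) dx`, `k ∈ ℤ`, converge -/
  moments : ∀ (k : ℤ) (t : ℝ), 0 < t →
    IntegrableOn (fun x : ℝ => x ^ k * weight lam t x) (Set.Ioi (0:ℝ))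
  monic : ∀ n t, 0 < t → (P n t).Monic
  natDegree_eq : ∀ n t, 0 < t → (P n t).natDegree = n
  h_pos : ∀ n t, 0 < t → 0 < h n t
  orth : ∀ m n t, 0 < t →
    ∫ x in Set.Ioi (0:ℝ), (P m t).eval x * (P n t).eval x * weight lam t x
      = if m = n then h n t else 0
  P_zero : ∀ t, 0 < t → P 0 t = 1
  recur : ∀ n t, 0 < t →
    Polynomial.X * P n t
      = P (n+1) t + Polynomial.C (α n t) * P n t
        + Polynomial.C (β n t) * (if n = 0 then 0 else P (n-1) t)

/-- The auxiliary quantity `Rₙ(t) = (t/hₙ) ∫₀^∞ y⁻¹ Pₙ(y)² w(y;t) dy`. -/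
noncomputable def Rn (lam : ℝ) (S : SingLaguerreOPS lam) (n : ℕ) (t : ℝ) : ℝ :=
  t / S.h n t * ∫ y in Set.Ioi (0:ℝ), ((S.P n t).eval y) ^ 2 * weight lam t y / y

/-- The auxiliary quantity `rₙ(t) = (t/hₙ₋₁) ∫₀^∞ y⁻¹ Pₙ(y) Pₙ₋₁(y) w(y;t) dy`
(with the convention `P₋₁ = 0`, so `r₀ = 0`). -/
noncomputable def rn (lam : ℝ) (S : SingLaguerreOPS lam) (n : ℕ) (t : ℝ) : ℝ :=
  t / S.h (n-1) t *
    ∫ y in Set.Ioi (0:ℝ),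
      (S.P n t).eval y * (if n = 0 then 0 else (S.P (n-1) t).eval y) * weight lam t y / y

/-- The derivative `v'(z) = 2z - λ/z - t/z²` of the potential `v(z) = z² + t/z - λ ln z`. -/
noncomputable def vprime (lam t z : ℝ) : ℝ := 2 * z - lam / z - t / z ^ 2

lemma integrable_poly_zpow {lam t : ℝ} (ht : 0 < t) (S : SingLaguerreOPS lam)
    (q : Polynomial ℝ) (k : ℤ) :
    IntegrableOn (fun x : ℝ => q.eval x * x ^ k * weight lam t x) (Set.Ioi 0) := by
  induction q using Polynomial.induction_on' with
  | add p r hp hr =>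
      have := hp.add hr
      refine IntegrableOn.congr_fun this (fun x _ => ?_) measurableSet_Ioi
      simp [Polynomial.eval_add]; ring
  | monomial i a =>
      have hbase := (S.moments (i + k) t ht).const_mul a
      refine IntegrableOn.congr_fun hbase (fun x hx => ?_) measurableSet_Ioi
      have hx0 : (x:ℝ) ≠ 0 := ne_of_gt hx
      simp only [Polynomial.eval_monomial]
      rw [zpow_add₀ hx0, zpow_natCast]
      ring


noncomputable def wI (lam t : ℝ) (S : SingLaguerreOPS lam) (q : Polynomial ℝ) (m : ℕ) : ℝ :=
  ∫ x in Set.Ioi (0:ℝ), q.eval x * (S.P m t).eval x * weight lam t x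

lemma integrable_wI {lam t : ℝ} (ht : 0 < t) (S : SingLaguerreOPS lam)
    (q : Polynomial ℝ) (m : ℕ) :
    IntegrableOn (fun x : ℝ => q.eval x * (S.P m t).eval x * weight lam t x) (Set.Ioi 0) := by
  refine IntegrableOn.congr_fun (integrable_poly_zpow ht S (q * S.P m t) 0)
    (fun x hx => ?_) measurableSet_Ioi
  simp only [Polynomial.eval_mul, zpow_zero]; ring

lemma wI_add {lam t : ℝ} (ht : 0 < t) (S : SingLaguerreOPS lam)
    (p q : Polynomial ℝ) (m : ℕ) :
    wI lam t S (p + q) m = wI lam t S p m + wI lam t S q m := by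
  rw [wI, wI, wI, ← integral_add (integrable_wI ht S p m) (integrable_wI ht S q m)]
  congr 1; funext x; simp [Polynomial.eval_add]; ring

lemma wI_smul (lam t : ℝ) (S : SingLaguerreOPS lam)
    (c : ℝ) (q : Polynomial ℝ) (m : ℕ) :
    wI lam t S (Polynomial.C c * q) m = c * wI lam t S q m := by
  rw [wI, wI, ← integral_const_mul]
  congr 1; funext x; simp only [Polynomial.eval_mul, Polynomial.eval_C]; ring

lemma wI_P {lam t : ℝ} (ht : 0 < t) (S : SingLaguerreOPS lam) (a m : ℕ) :
    wI lam t S (S.P a t) m = if a = m then S.h m t else 0 := S.orth a m t ht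

lemma wI_zero (lam t : ℝ) (S : SingLaguerreOPS lam) (m : ℕ) :
    wI lam t S 0 m = 0 := by
  rw [wI]; simp

lemma natDegree_lt_of_coeff {r : Polynomial ℝ} {m : ℕ} (h1 : r.natDegree ≤ m + 1)
    (h2 : r.coeff (m + 1) = 0) : r.natDegree ≤ m := by
  rw [Polynomial.natDegree_le_iff_coeff_eq_zero] at h1 ⊢
  intro k hk
  rcases eq_or_lt_of_le (Nat.succ_le_of_lt hk) with hkk | hkk
  · rw [← hkk]; exact h2
  · exact h1 k hkk

lemma wI_eq_zero {lam t : ℝ} (ht : 0 < t) (S : SingLaguerreOPS lam) :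
    ∀ (d : ℕ) (q : Polynomial ℝ), q.natDegree ≤ d → ∀ m, d < m → wI lam t S q m = 0 := by
  intro d
  induction d with
  | zero =>
      intro q hq m hm
      rw [Polynomial.eq_C_of_natDegree_le_zero hq]
      have : (Polynomial.C (q.coeff 0) : Polynomial ℝ) = Polynomial.C (q.coeff 0) * S.P 0 t := by
        rw [S.P_zero t ht, mul_one]
      rw [this, wI_smul, wI_P ht S 0 m, if_neg (by omega)]
      ring
  | succ d ih =>
      intro q hq m hm
      rcases Nat.lt_or_ge q.natDegree (d+1) with hlt | hge
      · exact ih q (Nat.lt_succ_iff.mp hlt) m (by omega)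
      · have hdeg : q.natDegree = d + 1 := le_antisymm hq hge
        set c := q.coeff (d+1) with hc
        set r := q - Polynomial.C c * S.P (d+1) t with hr
        have hPdeg : (S.P (d+1) t).natDegree = d + 1 := S.natDegree_eq (d+1) t ht
        have hPc : (S.P (d+1) t).coeff (d+1) = 1 := by
          have := (S.monic (d+1) t ht).coeff_natDegree
          rwa [hPdeg] at this
        have hrdeg : r.natDegree ≤ d := by
          apply natDegree_lt_of_coeff
          · apply le_trans (Polynomial.natDegree_sub_le _ _)
            simp only [max_le_iff]
            refine ⟨hq, le_trans (Polynomial.natDegree_mul_le) ?_⟩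
            simp [hPdeg]
          · simp [hr, hPc, ← hc]
        have hq' : q = r + Polynomial.C c * S.P (d+1) t := by rw [hr]; ring
        rw [hq', wI_add ht, wI_smul, wI_P ht, if_neg (by omega),
          ih r hrdeg m (by omega)]
        ring

lemma wI_coeff {lam t : ℝ} (ht : 0 < t) (S : SingLaguerreOPS lam)
    (q : Polynomial ℝ) (m : ℕ) (hq : q.natDegree ≤ m) :
    wI lam t S q m = q.coeff m * S.h m t := by
  set c := q.coeff m with hc
  set r := q - Polynomial.C c * S.P m t with hr
  have hPdeg : (S.P m t).natDegree = m := S.natDegree_eq m t ht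
  have hPc : (S.P m t).coeff m = 1 := by
    have := (S.monic m t ht).coeff_natDegree
    rwa [hPdeg] at this
  have hrdeg : r.natDegree ≤ m := by
    apply le_trans (Polynomial.natDegree_sub_le _ _)
    simp only [max_le_iff]
    exact ⟨hq, le_trans (Polynomial.natDegree_mul_le) (by simp [hPdeg])⟩
  have hrc : r.coeff m = 0 := by simp [hr, hPc, ← hc]
  have hrzero : wI lam t S r m = 0 := by
    cases m with
    | zero =>
        have : r = 0 := by
          have := Polynomial.eq_C_of_natDegree_le_zero hrdeg
          rwa [hrc, map_zero] at this
        rw [this, wI_zero]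
    | succ d =>
        exact wI_eq_zero ht S d r (natDegree_lt_of_coeff hrdeg hrc) (d+1) (by omega)
  have hq' : q = r + Polynomial.C c * S.P m t := by rw [hr]; ring
  rw [hq', wI_add ht, wI_smul, wI_P ht, if_pos rfl, hrzero]
  ring

lemma wI_lt {lam t : ℝ} (ht : 0 < t) (S : SingLaguerreOPS lam)
    (q : Polynomial ℝ) (m : ℕ) (hq : q.natDegree < m) : wI lam t S q m = 0 := by
  rw [wI_coeff ht S q m hq.le, Polynomial.coeff_eq_zero_of_natDegree_lt hq]
  ring

open Polynomial in
lemma wI_X_up {lam t : ℝ} (ht : 0 < t) (S : SingLaguerreOPS lam) (m : ℕ) :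
    wI lam t S (Polynomial.X * S.P m t) (m+1) = S.h (m+1) t := by
  rw [S.recur m t ht, wI_add ht, wI_add ht, wI_smul, wI_P ht, wI_P ht,
    if_pos rfl, if_neg (by omega)]
  rcases Nat.eq_zero_or_pos m with hm | hm
  · subst hm; rw [if_pos rfl, wI_smul, wI_zero]; ring
  · rw [if_neg (by omega), wI_smul, wI_P ht, if_neg (by omega)]; ring

open Polynomial in
lemma h_succ {lam t : ℝ} (ht : 0 < t) (S : SingLaguerreOPS lam) (m : ℕ) :
    S.h (m+1) t = S.β (m+1) t * S.h m t := by
  have h1 : wI lam t S (Polynomial.X * S.P (m+1) t) m = S.β (m+1) t * S.h m t := by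
    rw [S.recur (m+1) t ht, if_neg (Nat.succ_ne_zero m)]
    simp only [Nat.add_sub_cancel]
    rw [wI_add ht, wI_add ht, wI_smul, wI_smul, wI_P ht, wI_P ht, wI_P ht,
      if_neg (by omega), if_neg (by omega), if_pos rfl]
    ring
  have h2 : wI lam t S (Polynomial.X * S.P (m+1) t) m
      = wI lam t S (Polynomial.X * S.P m t) (m+1) := by
    rw [wI, wI]; congr 1; funext x
    simp only [Polynomial.eval_mul, Polynomial.eval_X]; ring
  rw [← wI_X_up ht S m, ← h2, h1]

open Polynomial in
lemma wI_X_self {lam t : ℝ} (ht : 0 < t) (S : SingLaguerreOPS lam) (m : ℕ) :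
    wI lam t S (Polynomial.X * S.P (m+1) t) (m+1) = S.α (m+1) t * S.h (m+1) t := by
  rw [S.recur (m+1) t ht, if_neg (Nat.succ_ne_zero m)]
  simp only [Nat.add_sub_cancel]
  rw [wI_add ht, wI_add ht, wI_smul, wI_smul, wI_P ht, wI_P ht, wI_P ht,
    if_neg (by omega), if_pos rfl, if_neg (by omega)]
  ring

open Polynomial in
lemma wI_Xsq {lam t : ℝ} (ht : 0 < t) (S : SingLaguerreOPS lam) (m : ℕ) :
    wI lam t S (Polynomial.X^2 * S.P m t) (m+1)
      = (S.α (m+1) t + S.α m t) * S.h (m+1) t := by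
  have hd : (Polynomial.X^2 * S.P m t : Polynomial ℝ)
      = Polynomial.X * (Polynomial.X * S.P m t) := by ring
  rw [hd, S.recur m t ht]
  have hd2 : (Polynomial.X * (S.P (m+1) t + Polynomial.C (S.α m t) * S.P m t
        + Polynomial.C (S.β m t) * (if m = 0 then 0 else S.P (m-1) t)) : Polynomial ℝ)
      = Polynomial.X * S.P (m+1) t + Polynomial.C (S.α m t) * (Polynomial.X * S.P m t)
        + Polynomial.C (S.β m t) * (Polynomial.X * (if m = 0 then 0 else S.P (m-1) t)) := by
    ring
  rw [hd2, wI_add ht, wI_add ht, wI_smul, wI_smul, wI_X_self ht, wI_X_up ht]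
  have h3 : wI lam t S (Polynomial.X * (if m = 0 then 0 else S.P (m-1) t)) (m+1) = 0 := by
    rcases Nat.eq_zero_or_pos m with hm | hm
    · subst hm; rw [if_pos rfl, mul_zero, wI_zero]
    · rw [if_neg (by omega)]
      refine wI_lt ht S _ _ ?_
      have hne : S.P (m-1) t ≠ 0 := (S.monic (m-1) t ht).ne_zero
      rw [Polynomial.natDegree_X_mul hne, S.natDegree_eq (m-1) t ht]
      omega
  rw [h3]
  ring

open Polynomial in
lemma coeff_sub_one {lam t : ℝ} (ht : 0 < t) (S : SingLaguerreOPS lam) :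
    ∀ m : ℕ, (S.P (m+1) t).coeff m = -∑ j ∈ Finset.range (m+1), S.α j t := by
  intro m
  induction m with
  | zero =>
      have h := congrArg (fun p : Polynomial ℝ => p.coeff 0) (S.recur 0 t ht)
      simp only [S.P_zero t ht, if_pos rfl, mul_one, mul_zero, add_zero,
        Polynomial.coeff_add, Polynomial.mul_coeff_zero, Polynomial.coeff_X_zero,
        Polynomial.coeff_one, Polynomial.coeff_C, zero_mul, ite_true,
        Polynomial.coeff_zero] at h
      rw [show (0:ℕ)+1 = 1 from rfl, Finset.sum_range_one]
      linarith [h]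
  | succ m ih =>
      have h := congrArg (fun p : Polynomial ℝ => p.coeff (m+1)) (S.recur (m+1) t ht)
      have hP1 : (S.P (m+1) t).coeff (m+1) = 1 := by
        have := (S.monic (m+1) t ht).coeff_natDegree
        rwa [S.natDegree_eq (m+1) t ht] at this
      have hPm : (S.P m t).coeff (m+1) = 0 := by
        apply Polynomial.coeff_eq_zero_of_natDegree_lt
        rw [S.natDegree_eq m t ht]; omega
      simp only [if_neg (Nat.succ_ne_zero m), Nat.add_sub_cancel,
        Polynomial.coeff_add, Polynomial.coeff_X_mul, Polynomial.coeff_C_mul,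
        hP1, hPm, mul_one, mul_zero, add_zero, ih] at h
      rw [Finset.sum_range_succ]
      linarith [h]

open Polynomial in
lemma wI_X_deriv {lam t : ℝ} (ht : 0 < t) (S : SingLaguerreOPS lam) (m : ℕ) :
    wI lam t S (Polynomial.X * Polynomial.derivative (S.P (m+1) t)) m
      = -((S.P (m+1) t).coeff m) * S.h m t := by
  set q : Polynomial ℝ := Polynomial.X * Polynomial.derivative (S.P (m+1) t) with hq
  set c : ℝ := (m : ℝ) + 1 with hc
  set r : Polynomial ℝ := q - Polynomial.C c * S.P (m+1) t with hr
  have hPdeg : (S.P (m+1) t).natDegree = m + 1 := S.natDegree_eq (m+1) t ht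
  have hP1 : (S.P (m+1) t).coeff (m+1) = 1 := by
    have := (S.monic (m+1) t ht).coeff_natDegree
    rwa [hPdeg] at this
  have hqdeg : q.natDegree ≤ m + 1 := by
    refine le_trans (Polynomial.natDegree_mul_le) ?_
    have : (Polynomial.derivative (S.P (m+1) t)).natDegree ≤ m := by
      refine le_trans (Polynomial.natDegree_derivative_le _) ?_
      rw [hPdeg]
      omega
    simp only [Polynomial.natDegree_X]
    omega
  have hqc : q.coeff (m+1) = c := by
    rw [hq, Polynomial.coeff_X_mul, Polynomial.coeff_derivative, hP1, hc]
    push_cast; ring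
  have hrdeg : r.natDegree ≤ m := by
    apply natDegree_lt_of_coeff
    · refine le_trans (Polynomial.natDegree_sub_le _ _) ?_
      simp only [max_le_iff]
      exact ⟨hqdeg, le_trans (Polynomial.natDegree_mul_le) (by simp [hPdeg])⟩
    · simp [hr, hqc, hP1]
  have hrc : r.coeff m = -((S.P (m+1) t).coeff m) := by
    rw [hr]
    simp only [Polynomial.coeff_sub, Polynomial.coeff_C_mul]
    have hqm : q.coeff m = (m : ℝ) * (S.P (m+1) t).coeff m := by
      cases m with
      | zero =>
          rw [hq]
          simp [Polynomial.mul_coeff_zero]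
      | succ d =>
          rw [hq, Polynomial.coeff_X_mul, Polynomial.coeff_derivative]
          push_cast; ring
    rw [hqm, hc]
    push_cast; ring
  have hq' : q = r + Polynomial.C c * S.P (m+1) t := by rw [hr]; ring
  rw [hq', wI_add ht, wI_smul, wI_P ht, if_neg (by omega),
    wI_coeff ht S r m hrdeg, hrc]
  ring

lemma weight_hasDerivAt {lam t x : ℝ} (hx : 0 < x) :
    HasDerivAt (weight lam t) ((lam / x - 2*x + t / x^2) * weight lam t x) x := by
  have hx0 : x ≠ 0 := ne_of_gt hx
  have hfun : (weight lam t) = fun y => y ^ lam * Real.exp (-y ^ 2 - t * y⁻¹) := by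
    funext y; rw [weight, div_eq_mul_inv]
  have h1 : HasDerivAt (fun y : ℝ => y ^ lam) (lam * x ^ (lam - 1)) x := by
    simpa using Real.hasDerivAt_rpow_const (p := lam) (Or.inl hx0)
  have h2 : HasDerivAt (fun y : ℝ => -y ^ 2 - t * y⁻¹)
      (-(2 * x) - t * (-(x^2)⁻¹)) x := by
    have ha : HasDerivAt (fun y : ℝ => -y ^ 2) (-(2*x)) x := by
      simpa using (hasDerivAt_pow 2 x).fun_neg
    exact ha.sub ((hasDerivAt_inv hx0).const_mul t)
  have h3 := h1.fun_mul h2.exp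
  rw [hfun]
  convert h3 using 1
  · rfl
  · rfl
  rw [Real.rpow_sub hx, Real.rpow_one]
  simp only []
  field_simp
  ring

lemma tendsto_rpow_exp_atTop (t : ℝ) (ht : 0 < t) (s : ℝ) :
    Tendsto (fun x : ℝ => x ^ s * Real.exp (-x^2 - t/x)) atTop (𝓝 0) := by
  have hbase : Tendsto (fun u : ℝ => u ^ (s/2) * Real.exp (-1 * u)) atTop (𝓝 0) :=
    tendsto_rpow_mul_exp_neg_mul_atTop_nhds_zero (s/2) 1 one_pos
  have hsq : Tendsto (fun x : ℝ => x^2) atTop atTop := tendsto_pow_atTop (by norm_num)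
  have hg : Tendsto (fun x : ℝ => (x^2) ^ (s/2) * Real.exp (-1 * x^2)) atTop (𝓝 0) :=
    hbase.comp hsq
  apply squeeze_zero' ?h0 ?hle hg
  case h0 =>
    filter_upwards [eventually_gt_atTop (0:ℝ)] with x hx
    positivity
  case hle =>
    filter_upwards [eventually_gt_atTop (0:ℝ)] with x hx
    have hpow : (x^2 : ℝ) ^ (s/2) = x ^ s := by
      rw [← Real.rpow_natCast x 2, ← Real.rpow_mul hx.le]
      norm_num
      congr 1
      ring
    rw [hpow]
    apply mul_le_mul_of_nonneg_left _ (Real.rpow_nonneg hx.le s)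
    apply Real.exp_le_exp.mpr
    have : 0 ≤ t / x := by positivity
    nlinarith

lemma tendsto_poly_weight_atTop {lam t : ℝ} (ht : 0 < t) (q : Polynomial ℝ) :
    Tendsto (fun x : ℝ => q.eval x * weight lam t x) atTop (𝓝 0) := by
  induction q using Polynomial.induction_on' with
  | add p r hp hr =>
      have := hp.add hr
      simp only [add_zero] at this
      refine this.congr (fun x => ?_)
      simp [Polynomial.eval_add]; ring
  | monomial i a =>
      have h := (tendsto_rpow_exp_atTop t ht ((i:ℝ) + lam)).const_mul a
      rw [mul_zero] at h
      refine h.congr' ?_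
      filter_upwards [eventually_gt_atTop (0:ℝ)] with x hx
      simp only [Polynomial.eval_monomial, weight]
      rw [Real.rpow_add hx, Real.rpow_natCast]
      ring

lemma tendsto_weight_zero {lam t : ℝ} (hlam : 0 ≤ lam) (ht : 0 < t) :
    Tendsto (fun x : ℝ => weight lam t x) (𝓝[>] (0:ℝ)) (𝓝 0) := by
  have hexp : Tendsto (fun x : ℝ => Real.exp (-(t/x))) (𝓝[>] (0:ℝ)) (𝓝 0) := by
    have h1 : Tendsto (fun x : ℝ => t / x) (𝓝[>] (0:ℝ)) atTop := by
      have := tendsto_inv_nhdsGT_zero (𝕜 := ℝ)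
      have h2 := Tendsto.const_mul_atTop ht this
      refine h2.congr (fun x => ?_)
      rw [div_eq_mul_inv]
    exact Real.tendsto_exp_atBot.comp (tendsto_neg_atTop_atBot.comp h1)
  apply squeeze_zero' ?h0 ?hle hexp
  case h0 =>
    filter_upwards [self_mem_nhdsWithin] with x hx
    have hx' : (0:ℝ) < x := hx
    rw [weight]
    positivity
  case hle =>
    filter_upwards [Ioo_mem_nhdsGT_of_mem (Set.left_mem_Ico.mpr zero_lt_one)] with x hx
    obtain ⟨hx0, hx1⟩ := hx
    rw [weight]
    have e1 : Real.exp (-x^2 - t/x) = Real.exp (-x^2) * Real.exp (-(t/x)) := by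
      rw [← Real.exp_add]; ring_nf
    rw [e1]
    have b1 : x ^ lam ≤ 1 := Real.rpow_le_one hx0.le hx1.le hlam
    have b2 : Real.exp (-x^2) ≤ 1 := Real.exp_le_one_iff.mpr (by nlinarith)
    have b3 : 0 ≤ Real.exp (-(t/x)) := Real.exp_nonneg _
    calc x ^ lam * (Real.exp (-x^2) * Real.exp (-(t/x)))
        ≤ 1 * (Real.exp (-x^2) * Real.exp (-(t/x))) :=
          mul_le_mul_of_nonneg_right b1 (by positivity)
      _ = Real.exp (-x^2) * Real.exp (-(t/x)) := one_mul _
      _ ≤ 1 * Real.exp (-(t/x)) := mul_le_mul_of_nonneg_right b2 b3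
      _ = Real.exp (-(t/x)) := one_mul _

lemma tendsto_poly_weight_zero {lam t : ℝ} (hlam : 0 ≤ lam) (ht : 0 < t) (q : Polynomial ℝ) :
    Tendsto (fun x : ℝ => q.eval x * weight lam t x) (𝓝[>] (0:ℝ)) (𝓝 0) := by
  have h1 : Tendsto (fun x : ℝ => q.eval x) (𝓝[>] (0:ℝ)) (𝓝 (q.eval 0)) :=
    (q.continuous.tendsto 0).mono_left nhdsWithin_le_nhds
  simpa using h1.mul (tendsto_weight_zero hlam ht)

lemma ibp {lam t : ℝ} (hlam : 0 ≤ lam) (ht : 0 < t) (S : SingLaguerreOPS lam)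
    (q : Polynomial ℝ) :
    ∫ x in Set.Ioi (0:ℝ), ((Polynomial.derivative q).eval x
        + q.eval x * (lam / x - 2*x + t / x^2)) * weight lam t x = 0 := by
  set G : ℝ → ℝ := fun x => q.eval x * weight lam t x with hG
  set g : ℝ → ℝ := fun x => ((Polynomial.derivative q).eval x
      + q.eval x * (lam / x - 2*x + t / x^2)) * weight lam t x with hg
  have hderiv : ∀ x ∈ Set.Ioi (0:ℝ), HasDerivAt G (g x) x := by
    intro x hx
    have h := (q.hasDerivAt x).fun_mul (weight_hasDerivAt (lam := lam) (t := t) hx)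
    convert h using 1
    · rfl
    · rfl
    simp only [hg]
    ring
  have hint : IntegrableOn g (Set.Ioi 0) := by
    have h1 := integrable_poly_zpow ht S (Polynomial.derivative q) 0
    have h2 := (integrable_poly_zpow ht S q (-1)).const_mul lam
    have h3 := (integrable_poly_zpow ht S (Polynomial.X * q) 0).const_mul (-2)
    have h4 := (integrable_poly_zpow ht S q (-2)).const_mul t
    refine IntegrableOn.congr_fun (((h1.add h2).add h3).add h4)
      (fun x hx => ?_) measurableSet_Ioi
    have hx0 : (x:ℝ) ≠ 0 := ne_of_gt hx
    simp only [Pi.add_apply, Polynomial.eval_mul, Polynomial.eval_X, hg,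
      zpow_zero, zpow_neg, zpow_one, mul_one]
    have hz2 : (x : ℝ) ^ (2:ℤ) = x ^ 2 := by norm_cast
    rw [hz2]
    field_simp
    ring
  have hInf : Tendsto G atTop (𝓝 0) := tendsto_poly_weight_atTop ht q
  have h0 : Tendsto G (𝓝[>] (0:ℝ)) (𝓝 0) := tendsto_poly_weight_zero hlam ht q
  have key : ∀ a : ℝ, 0 < a → ∫ x in Set.Ioi a, g x = - G a := by
    intro a ha
    have := integral_Ioi_of_hasDerivAt_of_tendsto (f := G) (f' := g) (a := a) (m := 0)
      ((hderiv a ha).continuousAt.continuousWithinAt)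
      (fun x hx => hderiv x (lt_trans ha hx))
      (hint.mono_set (Set.Ioi_subset_Ioi ha.le)) hInf
    simpa using this
  have hmono : Monotone (fun k : ℕ => Set.Ioi ((1:ℝ)/(k+1))) := by
    intro i j hij
    apply Set.Ioi_subset_Ioi
    apply one_div_le_one_div_of_le (by positivity)
    exact_mod_cast by omega
  have hunion : (⋃ k : ℕ, Set.Ioi ((1:ℝ)/(k+1))) = Set.Ioi (0:ℝ) := by
    ext x
    simp only [Set.mem_iUnion, Set.mem_Ioi]
    constructor
    · rintro ⟨k, hk⟩
      exact lt_trans (by positivity) hk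
    · intro hx
      obtain ⟨k, hk⟩ := exists_nat_one_div_lt hx
      exact ⟨k, hk⟩
  have T1 : Tendsto (fun k : ℕ => ∫ x in Set.Ioi ((1:ℝ)/(k+1)), g x) atTop
      (𝓝 (∫ x in Set.Ioi (0:ℝ), g x)) := by
    have := tendsto_setIntegral_of_monotone (fun k : ℕ => measurableSet_Ioi) hmono
      (hunion ▸ hint)
    rwa [hunion] at this
  have T2 : Tendsto (fun k : ℕ => ∫ x in Set.Ioi ((1:ℝ)/(k+1)), g x) atTop (𝓝 0) := by
    have heq : ∀ k : ℕ, ∫ x in Set.Ioi ((1:ℝ)/(k+1)), g x = - G (1/(k+1)) :=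
      fun k => key _ (by positivity)
    have hseq : Tendsto (fun k : ℕ => (1:ℝ)/(k+1)) atTop (𝓝[>] (0:ℝ)) := by
      apply tendsto_nhdsWithin_of_tendsto_nhds_of_eventually_within
      · exact tendsto_one_div_add_atTop_nhds_zero_nat
      · exact Filter.Eventually.of_forall (fun k => Set.mem_Ioi.mpr (by positivity))
    have := (h0.comp hseq).neg
    rw [neg_zero] at this
    exact Tendsto.congr (fun k => (heq k).symm) this
  exact tendsto_nhds_unique T1 T2


open Polynomial in
theorem statement10 (lam t : ℝ) (hlam : 0 ≤ lam) (ht : 0 < t)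
    (S : SingLaguerreOPS lam) (n : ℕ) (hn : 1 ≤ n) :
    rn lam S n t + ∑ j ∈ Finset.range n, S.α j t
      = 2 * S.β n t * (S.α n t + S.α (n-1) t) := by
  obtain ⟨m, rfl⟩ : ∃ m, n = m + 1 := ⟨n - 1, by omega⟩
  simp only [Nat.add_sub_cancel]
  set q : Polynomial ℝ := Polynomial.X * S.P (m+1) t * S.P m t with hq
  have master := ibp hlam ht S q
  -- pointwise rewrite of the integrand
  have hD : Polynomial.derivative q
      = S.P (m+1) t * S.P m t + Polynomial.X * Polynomial.derivative (S.P (m+1) t) * S.P m t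
        + Polynomial.X * S.P (m+1) t * Polynomial.derivative (S.P m t) := by
    simp [hq, Polynomial.derivative_mul, Polynomial.derivative_X]
    ring
  have hEq : Set.EqOn
      (fun x : ℝ => ((Polynomial.derivative q).eval x
          + q.eval x * (lam / x - 2*x + t / x^2)) * weight lam t x)
      (fun x : ℝ =>
        (Polynomial.X * Polynomial.derivative (S.P (m+1) t)).eval x * (S.P m t).eval x * weight lam t x
        + ((Polynomial.X * Polynomial.derivative (S.P m t)).eval x * (S.P (m+1) t).eval x * weight lam t x
        + ((S.P (m+1) t).eval x * (S.P m t).eval x * weight lam t x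
        + (lam * ((S.P (m+1) t).eval x * (S.P m t).eval x * weight lam t x)
        + (-2 * ((Polynomial.X^2 * S.P m t).eval x * (S.P (m+1) t).eval x * weight lam t x)
        + t * ((S.P (m+1) t).eval x * (S.P m t).eval x * weight lam t x / x))))))
      (Set.Ioi 0) := by
    intro x hx
    have hx0 : (x:ℝ) ≠ 0 := ne_of_gt hx
    rw [hD]
    simp only [hD, hq, Polynomial.eval_add, Polynomial.eval_mul, Polynomial.eval_X,
      Polynomial.eval_pow]
    field_simp
    ring
  rw [setIntegral_congr_fun measurableSet_Ioi hEq] at master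
  -- integrability of the pieces
  have i6 : IntegrableOn (fun x : ℝ =>
      t * ((S.P (m+1) t).eval x * (S.P m t).eval x * weight lam t x / x)) (Set.Ioi 0) := by
    refine IntegrableOn.congr_fun
      ((integrable_poly_zpow ht S (S.P (m+1) t * S.P m t) (-1)).const_mul t)
      (fun x hx => ?_) measurableSet_Ioi
    have hx0 : (x:ℝ) ≠ 0 := ne_of_gt hx
    simp only [Polynomial.eval_mul, zpow_neg, zpow_one, div_eq_mul_inv]
    ring
  have i5 : IntegrableOn (fun x : ℝ =>
      -2 * ((Polynomial.X^2 * S.P m t).eval x * (S.P (m+1) t).eval x * weight lam t x))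
      (Set.Ioi 0) := (integrable_wI ht S (Polynomial.X^2 * S.P m t) (m+1)).const_mul (-2)
  have i4 : IntegrableOn (fun x : ℝ =>
      lam * ((S.P (m+1) t).eval x * (S.P m t).eval x * weight lam t x)) (Set.Ioi 0) :=
    (integrable_wI ht S (S.P (m+1) t) m).const_mul lam
  have i3 : IntegrableOn (fun x : ℝ =>
      (S.P (m+1) t).eval x * (S.P m t).eval x * weight lam t x) (Set.Ioi 0) :=
    integrable_wI ht S (S.P (m+1) t) m
  have i2 : IntegrableOn (fun x : ℝ =>
      (Polynomial.X * Polynomial.derivative (S.P m t)).eval x * (S.P (m+1) t).eval x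
        * weight lam t x) (Set.Ioi 0) :=
    integrable_wI ht S (Polynomial.X * Polynomial.derivative (S.P m t)) (m+1)
  have i1 : IntegrableOn (fun x : ℝ =>
      (Polynomial.X * Polynomial.derivative (S.P (m+1) t)).eval x * (S.P m t).eval x
        * weight lam t x) (Set.Ioi 0) :=
    integrable_wI ht S (Polynomial.X * Polynomial.derivative (S.P (m+1) t)) m
  have a5 : IntegrableOn (fun x : ℝ =>
      -2 * ((Polynomial.X^2 * S.P m t).eval x * (S.P (m+1) t).eval x * weight lam t x)
      + t * ((S.P (m+1) t).eval x * (S.P m t).eval x * weight lam t x / x)) (Set.Ioi 0) :=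
    i5.add i6
  have a4 : IntegrableOn (fun x : ℝ =>
      lam * ((S.P (m+1) t).eval x * (S.P m t).eval x * weight lam t x)
      + (-2 * ((Polynomial.X^2 * S.P m t).eval x * (S.P (m+1) t).eval x * weight lam t x)
      + t * ((S.P (m+1) t).eval x * (S.P m t).eval x * weight lam t x / x))) (Set.Ioi 0) :=
    i4.add a5
  have a3 : IntegrableOn (fun x : ℝ =>
      (S.P (m+1) t).eval x * (S.P m t).eval x * weight lam t x
      + (lam * ((S.P (m+1) t).eval x * (S.P m t).eval x * weight lam t x)
      + (-2 * ((Polynomial.X^2 * S.P m t).eval x * (S.P (m+1) t).eval x * weight lam t x)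
      + t * ((S.P (m+1) t).eval x * (S.P m t).eval x * weight lam t x / x)))) (Set.Ioi 0) :=
    i3.add a4
  have a2 : IntegrableOn (fun x : ℝ =>
      (Polynomial.X * Polynomial.derivative (S.P m t)).eval x * (S.P (m+1) t).eval x * weight lam t x
      + ((S.P (m+1) t).eval x * (S.P m t).eval x * weight lam t x
      + (lam * ((S.P (m+1) t).eval x * (S.P m t).eval x * weight lam t x)
      + (-2 * ((Polynomial.X^2 * S.P m t).eval x * (S.P (m+1) t).eval x * weight lam t x)
      + t * ((S.P (m+1) t).eval x * (S.P m t).eval x * weight lam t x / x))))) (Set.Ioi 0) :=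
    i2.add a3
  rw [integral_add i1 a2, integral_add i2 a3, integral_add i3 a4,
    integral_add i4 a5, integral_add i5 i6] at master
  -- values of the pieces
  have v1 : ∫ x in Set.Ioi (0:ℝ),
      (Polynomial.X * Polynomial.derivative (S.P (m+1) t)).eval x * (S.P m t).eval x
        * weight lam t x = -((S.P (m+1) t).coeff m) * S.h m t := wI_X_deriv ht S m
  have v2 : ∫ x in Set.Ioi (0:ℝ),
      (Polynomial.X * Polynomial.derivative (S.P m t)).eval x * (S.P (m+1) t).eval x
        * weight lam t x = 0 := by
    show wI lam t S (Polynomial.X * Polynomial.derivative (S.P m t)) (m+1) = 0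
    rcases Nat.eq_zero_or_pos m with hm | hm
    · subst hm
      rw [Polynomial.eq_C_of_natDegree_le_zero (le_of_eq (S.natDegree_eq 0 t ht))]
      simp only [Polynomial.derivative_C, mul_zero]
      exact wI_zero lam t S 1
    · apply wI_lt ht
      have h1 : (Polynomial.derivative (S.P m t)).natDegree ≤ m - 1 := by
        refine le_trans (Polynomial.natDegree_derivative_le _) ?_
        rw [S.natDegree_eq m t ht]
      refine lt_of_le_of_lt (Polynomial.natDegree_mul_le) ?_
      simp only [Polynomial.natDegree_X]
      omega
  have v3 : ∫ x in Set.Ioi (0:ℝ),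
      (S.P (m+1) t).eval x * (S.P m t).eval x * weight lam t x = 0 := by
    have := S.orth (m+1) m t ht
    rwa [if_neg (by omega)] at this
  have v5 : ∫ x in Set.Ioi (0:ℝ),
      (Polynomial.X^2 * S.P m t).eval x * (S.P (m+1) t).eval x * weight lam t x
      = (S.α (m+1) t + S.α m t) * S.h (m+1) t := wI_Xsq ht S m
  rw [v1, v2, v3, integral_const_mul, integral_const_mul, integral_const_mul, v3, v5] at master
  -- the rn term
  have hrn : rn lam S (m+1) t = t / S.h m t *
      ∫ y in Set.Ioi (0:ℝ), (S.P (m+1) t).eval y * (S.P m t).eval y * weight lam t y / y := by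
    rw [rn]
    simp only [Nat.add_sub_cancel, if_neg (Nat.succ_ne_zero m)]
  set J := ∫ y in Set.Ioi (0:ℝ),
    (S.P (m+1) t).eval y * (S.P m t).eval y * weight lam t y / y with hJ
  have hcoeff := coeff_sub_one ht S m
  have hhm : S.h m t ≠ 0 := ne_of_gt (S.h_pos m t ht)
  have hhb := h_succ ht S m
  rw [hrn]
  rw [hcoeff, hhb] at master
  field_simp
  linear_combination master
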